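/- The set ℤ × (1/p)ℤ is a spectrum for the measure μ_B: the exponentials {e_λ : λ ∈ ℤ × (1/p)ℤ} form an orthonormal basis for L²(μ_B). -/

import Mathlib

open MeasureTheory Complex Filter Topology
open scoped ENNReal InnerProductSpace

noncomputable section

def expv {d : ℕ} (t x : Fin d → ℝ) : ℂ :=
  Complex.exp (2 * Real.pi * Complex.I * (∑ i, t i * x i))

/-- The `n`-th binary digit of `x` (the terminating expansion at dyadic
rationals): `x_n = ⌊2^n x⌋ mod 2`. -/
def binDigit (n : ℕ) (x : ℝ) : ℝ :=
  ((⌊(2 : ℝ) ^ n * x⌋ % 2 : ℤ) : ℝ)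

/-- `g(x) = -∑_{n ≥ 1} (n/2) x_n / 2^n` where `x = ∑ x_n / 2^n` is the binary
expansion of `x`. -/
def gfun (x : ℝ) : ℝ :=
  -∑' n : ℕ, ((n + 1 : ℝ) / 2) * binDigit (n + 1) x / 2 ^ (n + 1)


lemma measurable_binDigit (n : ℕ) : Measurable (binDigit n) := by
  exact (Measurable.of_discrete (f := fun k : ℤ => ((k % 2 : ℤ) : ℝ))).comp
    (measurable_id.const_mul ((2:ℝ)^n)).floor

lemma binDigit_mem (n : ℕ) (x : ℝ) : binDigit n x = 0 ∨ binDigit n x = 1 := by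
  unfold binDigit
  rcases Int.emod_two_eq ⌊(2:ℝ)^n * x⌋ with h | h <;> simp [h]

lemma binDigit_abs_le (n : ℕ) (x : ℝ) : |binDigit n x| ≤ 1 := by
  rcases binDigit_mem n x with h | h <;> simp [h]

lemma summable_aux : Summable (fun n : ℕ => ((n : ℝ) / 2) / 2 ^ n) := by
  have h := (summable_pow_mul_geometric_of_norm_lt_one (R := ℝ) 1
    (r := (2:ℝ)⁻¹) (by rw [norm_inv]; norm_num)).mul_left (1/2)
  apply h.congr
  intro n
  rw [inv_pow]
  field_simp

lemma summable_gfun (x : ℝ) :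
    Summable (fun n : ℕ => ((n + 1 : ℝ) / 2) * binDigit (n + 1) x / 2 ^ (n + 1)) := by
  apply Summable.of_norm
  have hs : Summable (fun n : ℕ => (((n : ℕ)+1 : ℝ) / 2) / 2 ^ (n+1)) := by
    have := (summable_nat_add_iff (f := fun n : ℕ => ((n : ℝ) / 2) / 2 ^ n) 1).mpr summable_aux
    apply this.congr; intro n; push_cast; ring_nf
  apply hs.of_nonneg_of_le (fun n => norm_nonneg _)
  intro n
  have h1 : ‖((n + 1 : ℝ) / 2) * binDigit (n + 1) x / 2 ^ (n + 1)‖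
      = ((n:ℝ) + 1) / 2 * |binDigit (n + 1) x| / 2 ^ (n + 1) := by
    rw [Real.norm_eq_abs, abs_div, abs_mul,
      _root_.abs_of_nonneg (by positivity : (0:ℝ) ≤ ((n:ℝ)+1)/2),
      _root_.abs_of_nonneg (by positivity : (0:ℝ) ≤ (2:ℝ)^(n+1))]
  rw [h1]
  calc ((n:ℝ) + 1) / 2 * |binDigit (n + 1) x| / 2 ^ (n + 1)
      ≤ ((n:ℝ) + 1) / 2 * 1 / 2 ^ (n + 1) := by gcongr; exact binDigit_abs_le _ _
    _ = ((n:ℝ) + 1) / 2 / 2 ^ (n + 1) := by ring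

lemma measurable_gfun : Measurable gfun := by
  unfold gfun
  apply Measurable.neg
  apply measurable_of_tendsto_metrizable
    (f := fun N x => ∑ n ∈ Finset.range N, ((n + 1 : ℝ) / 2) * binDigit (n + 1) x / 2 ^ (n + 1))
  · intro N
    exact Finset.measurable_sum _ fun n _ => (((measurable_binDigit (n+1)).const_mul _).div_const _)
  · rw [tendsto_pi_nhds]
    intro x
    exact (summable_gfun x).hasSum.tendsto_sum_nat

lemma expv_eq {d : ℕ} (t x : Fin d → ℝ) :
    expv t x = Complex.exp (((2 * Real.pi * ∑ i, t i * x i : ℝ) : ℂ) * Complex.I) := by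
  unfold expv; push_cast; ring_nf

lemma expv_abs {d : ℕ} (t x : Fin d → ℝ) : ‖expv t x‖ = 1 := by
  rw [expv_eq]; exact Complex.norm_exp_ofReal_mul_I _

lemma expv_norm {d : ℕ} (t x : Fin d → ℝ) : ‖expv t x‖ = 1 := expv_abs t x

lemma expv_continuous {d : ℕ} (t : Fin d → ℝ) : Continuous (expv t) := by
  unfold expv
  exact Complex.continuous_exp.comp (continuous_const.mul (by
    exact Complex.continuous_ofReal.comp (continuous_finset_sum _ fun i _ =>
      continuous_const.mul (continuous_apply i))))

lemma expv_measurable {d : ℕ} (t : Fin d → ℝ) : Measurable (expv t) :=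
  (expv_continuous t).measurable

lemma expv_zero {d : ℕ} (x : Fin d → ℝ) : expv 0 x = 1 := by
  unfold expv; simp

lemma conj_expv {d : ℕ} (t x : Fin d → ℝ) :
    (starRingEnd ℂ) (expv t x) = expv (-t) x := by
  rw [expv_eq, expv_eq, ← Complex.exp_conj]
  congr 1
  simp only [map_mul, Complex.conj_I, Complex.conj_ofReal, map_ofNat,
    Finset.sum_neg_distrib]
  simp only [Pi.neg_apply, Complex.ofReal_neg, neg_mul, Finset.sum_neg_distrib]
  ring_nf
  rw [Complex.ofReal_neg]
  ring

lemma key_circle {T : ℝ} (hT : 0 < T) {n : ℤ} (hn : n ≠ 0) :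
    ∫ y in Set.Icc (0:ℝ) T, Complex.exp (2*Real.pi*Complex.I*(((n : ℝ)/T * y : ℝ):ℂ)) = 0 := by
  have hc : (2*Real.pi*Complex.I*((n : ℝ)/T : ℂ)) ≠ 0 := by
    apply mul_ne_zero
    · apply mul_ne_zero
      · apply mul_ne_zero two_ne_zero
        exact_mod_cast Real.pi_ne_zero
      · exact Complex.I_ne_zero
    · push_cast
      apply div_ne_zero
      · exact_mod_cast hn
      · exact_mod_cast hT.ne'
  have hrw : ∀ y : ℝ, Complex.exp (2*Real.pi*Complex.I*(((n : ℝ)/T * y : ℝ):ℂ))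
      = Complex.exp ((2*Real.pi*Complex.I*((n : ℝ)/T : ℂ)) * (y : ℂ)) := by
    intro y; congr 1; push_cast; ring
  simp_rw [hrw]
  rw [MeasureTheory.integral_Icc_eq_integral_Ioc,
    ← intervalIntegral.integral_of_le hT.le,
    integral_exp_mul_complex hc]
  have h1 : (2*Real.pi*Complex.I*((n : ℝ)/T : ℂ)) * (T : ℂ) = (n : ℂ) * (2*Real.pi*Complex.I) := by
    have : ((T : ℂ)) ≠ 0 := by exact_mod_cast hT.ne'
    rw [mul_assoc, div_mul_cancel₀ _ this, Complex.ofReal_intCast]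
    ring
  rw [h1, Complex.exp_int_mul_two_pi_mul_I]
  simp

def Phi (z : ℝ × ℝ) : Fin 2 → ℝ := ![z.1, gfun z.1 + z.2]

lemma measurable_Phi : Measurable Phi := by
  unfold Phi
  rw [measurable_pi_iff]
  intro i
  fin_cases i
  · simpa using measurable_fst
  · exact (measurable_gfun.comp measurable_fst).add measurable_snd

def sigm (p : ℕ) : Measure (ℝ × ℝ) :=
  (volume.restrict (Set.Icc (0:ℝ) 1)).prod (volume.restrict (Set.Icc (0:ℝ) (p:ℝ)))

instance (p : ℕ) : IsFiniteMeasure (sigm p) := by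
  unfold sigm; infer_instance

lemma sigm_ne_top (p : ℕ) (s : Set (ℝ × ℝ)) : sigm p s ≠ ⊤ :=
  (measure_lt_top _ _).ne

-- iterated integral = product integral, for bounded measurable integrands
lemma iter_eq_prod (p : ℕ) (F : ℝ × ℝ → ℂ) (hF : Measurable F) (C : ℝ)
    (hC : ∀ z, ‖F z‖ ≤ C) :
    (∫ x in Set.Icc (0 : ℝ) 1, ∫ y in Set.Icc (0 : ℝ) (p : ℝ), F (x, y)) =
      ∫ z, F z ∂(sigm p) := by
  have hint : Integrable F (sigm p) :=
    (integrable_const C).mono' hF.aestronglyMeasurable (Filter.Eventually.of_forall hC)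
  exact (MeasureTheory.integral_prod F hint).symm

lemma map_eq (p : ℕ) (hppos : 0 < p) (μ : Measure (Fin 2 → ℝ)) [IsProbabilityMeasure μ]
    (hμ : ∀ f : (Fin 2 → ℝ) → ℂ, Measurable f →
      (∃ Cb : ℝ, ∀ z, ‖f z‖ ≤ Cb) →
      ∫ z, f z ∂μ = (p : ℂ)⁻¹ *
        ∫ x in Set.Icc (0 : ℝ) 1, ∫ y in Set.Icc (0 : ℝ) (p : ℝ),
          f ![x, gfun x + y]) :
    μ = Measure.map Phi (((p : ℝ≥0∞))⁻¹ • sigm p) := by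
  ext s hs
  have hf : Measurable (s.indicator (fun _ => (1:ℂ))) := measurable_const.indicator hs
  have hb : ∀ z, ‖(s.indicator (fun _ => (1:ℂ)) z)‖ ≤ 1 := by
    intro z
    by_cases h : z ∈ s
    · rw [Set.indicator_of_mem h]; simp
    · rw [Set.indicator_of_notMem h]; simp
  have key := hμ _ hf ⟨1, hb⟩
  have hcomp : ∀ x y : ℝ, s.indicator (fun _ => (1:ℂ)) ![x, gfun x + y]
      = (Phi ⁻¹' s).indicator (fun _ => (1:ℂ)) (x, y) := by
    intro x y
    have he : (![x, gfun x + y] : Fin 2 → ℝ) = Phi (x, y) := rfl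
    rw [he]
    by_cases h : Phi (x, y) ∈ s
    · rw [Set.indicator_of_mem h, Set.indicator_of_mem (by exact h)]
    · rw [Set.indicator_of_notMem h, Set.indicator_of_notMem (by exact h)]
  rw [show (∫ x in Set.Icc (0 : ℝ) 1, ∫ y in Set.Icc (0 : ℝ) (p : ℝ),
        s.indicator (fun _ => (1:ℂ)) ![x, gfun x + y]) =
      ∫ x in Set.Icc (0 : ℝ) 1, ∫ y in Set.Icc (0 : ℝ) (p : ℝ),
        (Phi ⁻¹' s).indicator (fun _ => (1:ℂ)) (x, y) from by
      simp_rw [hcomp]] at key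
  rw [iter_eq_prod p _ (measurable_const.indicator (measurable_Phi hs)) 1
      (by intro z; by_cases h : z ∈ Phi ⁻¹' s
          · rw [Set.indicator_of_mem h]; simp
          · rw [Set.indicator_of_notMem h]; simp)] at key
  rw [integral_indicator_const (1:ℂ) hs, integral_indicator_const (1:ℂ) (measurable_Phi hs)] at key
  simp only [Complex.real_smul, mul_one] at key
  -- key : ((μ s).toReal : ℂ) = (p:ℂ)⁻¹ * ((sigm p (Phi⁻¹' s)).toReal : ℂ)
  have hreal : (μ s).toReal = (p:ℝ)⁻¹ * (sigm p (Phi ⁻¹' s)).toReal := by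
    have := key
    simp only [Measure.real] at this
    rw [show ((p:ℂ))⁻¹ * ((sigm p (Phi ⁻¹' s)).toReal : ℂ)
        = (((p:ℝ)⁻¹ * (sigm p (Phi ⁻¹' s)).toReal : ℝ) : ℂ) from by push_cast; ring] at this
    exact_mod_cast this
  rw [Measure.map_apply measurable_Phi hs, Measure.smul_apply, smul_eq_mul]
  have h1 : μ s ≠ ⊤ := (measure_lt_top _ _).ne
  have h2 : ((p : ℝ≥0∞))⁻¹ * sigm p (Phi ⁻¹' s) ≠ ⊤ :=
    ENNReal.mul_ne_top (by simp [hppos.ne']) (sigm_ne_top p _)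
  rw [← ENNReal.toReal_eq_toReal_iff' h1 h2]
  rw [hreal, ENNReal.toReal_mul]
  congr 1
  simp

lemma integral_expv (p : ℕ) (hppos : 0 < p) (μ : Measure (Fin 2 → ℝ)) [IsProbabilityMeasure μ]
    (hμ : ∀ f : (Fin 2 → ℝ) → ℂ, Measurable f →
      (∃ Cb : ℝ, ∀ z, ‖f z‖ ≤ Cb) →
      ∫ z, f z ∂μ = (p : ℂ)⁻¹ *
        ∫ x in Set.Icc (0 : ℝ) 1, ∫ y in Set.Icc (0 : ℝ) (p : ℝ),
          f ![x, gfun x + y])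
    (m k : ℤ) :
    ∫ z, expv ![(m : ℝ), (k : ℝ)/p] z ∂μ = if m = 0 ∧ k = 0 then 1 else 0 := by
  have hp0 : (0:ℝ) < p := by exact_mod_cast hppos
  by_cases hmk : m = 0 ∧ k = 0
  · obtain ⟨hm, hk⟩ := hmk
    subst hm; subst hk
    have : (![((0:ℤ) : ℝ), ((0:ℤ) : ℝ)/p] : Fin 2 → ℝ) = 0 := by
      funext i; fin_cases i <;> simp
    rw [this]
    simp only [expv_zero]
    simp
  · simp only [hmk, if_false]
    set t : Fin 2 → ℝ := ![(m : ℝ), (k : ℝ)/p] with ht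
    have key := hμ (expv t) (expv_measurable t) ⟨1, fun z => le_of_eq (expv_abs t z)⟩
    rw [key]
    by_cases hk : k = 0
    · -- then m ≠ 0
      have hm : m ≠ 0 := fun h => hmk ⟨h, hk⟩
      subst hk
      have hconst : ∀ x y : ℝ, expv t ![x, gfun x + y]
          = Complex.exp (2*Real.pi*Complex.I*(((m : ℝ)/1 * x : ℝ):ℂ)) := by
        intro x y
        unfold expv
        rw [Fin.sum_univ_two, ht]
        congr 1
        push_cast
        simp [Matrix.cons_val_zero, Matrix.cons_val_one, Matrix.head_cons]
      have h2 : (∫ x in Set.Icc (0:ℝ) 1, ∫ y in Set.Icc (0:ℝ) (p:ℝ), expv t ![x, gfun x + y])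
          = (p:ℝ) • ∫ x in Set.Icc (0:ℝ) 1,
              Complex.exp (2*Real.pi*Complex.I*(((m : ℝ)/1 * x : ℝ):ℂ)) := by
        rw [← integral_smul]
        refine setIntegral_congr_fun measurableSet_Icc (fun x hx => ?_)
        simp_rw [hconst x]
        rw [MeasureTheory.setIntegral_const, Real.volume_real_Icc_of_le hp0.le, sub_zero]
      rw [h2, key_circle one_pos hm, smul_zero, mul_zero]
    · have hinner : ∀ x : ℝ, (∫ y in Set.Icc (0:ℝ) (p:ℝ), expv t ![x, gfun x + y]) = 0 := by
        intro x
        have hpt : ∀ y : ℝ, expv t ![x, gfun x + y]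
            = Complex.exp (2*Real.pi*Complex.I*(((m : ℝ)*x + ((k:ℝ)/p)*gfun x : ℝ):ℂ))
              * Complex.exp (2*Real.pi*Complex.I*(((k : ℝ)/p * y : ℝ):ℂ)) := by
          intro y
          unfold expv
          rw [Fin.sum_univ_two, ht, ← Complex.exp_add]
          congr 1
          push_cast
          ring
        simp_rw [hpt]
        rw [MeasureTheory.integral_const_mul, key_circle hp0 hk, mul_zero]
      simp_rw [hinner]
      simp

lemma expv_mul {d : ℕ} (s t x : Fin d → ℝ) : expv s x * expv t x = expv (s + t) x := by
  unfold expv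
  rw [← Complex.exp_add]
  congr 1
  have h : (∑ i, (s + t) i * x i) = (∑ i, s i * x i) + ∑ i, t i * x i := by
    rw [← Finset.sum_add_distrib]
    exact Finset.sum_congr rfl fun i _ => by simp [add_mul]
  rw [h]
  push_cast
  ring

lemma vec_inj (p : ℕ) (hppos : 0 < p) {m k m' k' : ℤ}
    (h : (![(m:ℝ), (k:ℝ)/p] : Fin 2 → ℝ) = ![(m':ℝ), (k':ℝ)/p]) : m = m' ∧ k = k' := by
  have hp0 : (p:ℝ) ≠ 0 := by positivity
  constructor
  · have := congrFun h 0
    simpa using this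
  · have h1 := congrFun h 1
    simp only [Matrix.cons_val_one, Matrix.head_cons, Matrix.cons_val_zero] at h1
    have : (k:ℝ) = k' := by
      rwa [div_left_inj' hp0] at h1
    exact_mod_cast this

lemma neg_vec_add (p : ℕ) (hppos : 0 < p) (m k m' k' : ℤ) :
    (-(![(m:ℝ), (k:ℝ)/p]) + ![(m':ℝ), (k':ℝ)/p] : Fin 2 → ℝ)
      = ![((m' - m : ℤ) : ℝ), ((k' - k : ℤ) : ℝ)/p] := by
  funext i
  fin_cases i <;> simp <;> push_cast <;> ring

lemma inner_E (p : ℕ) (hppos : 0 < p) (μ : Measure (Fin 2 → ℝ)) [IsProbabilityMeasure μ]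
    (hμ : ∀ f : (Fin 2 → ℝ) → ℂ, Measurable f →
      (∃ Cb : ℝ, ∀ z, ‖f z‖ ≤ Cb) →
      ∫ z, f z ∂μ = (p : ℂ)⁻¹ *
        ∫ x in Set.Icc (0 : ℝ) 1, ∫ y in Set.Icc (0 : ℝ) (p : ℝ),
          f ![x, gfun x + y])
    (E : (Fin 2 → ℝ) → Lp ℂ 2 μ)
    (hE : ∀ t : Fin 2 → ℝ, (E t : (Fin 2 → ℝ) → ℂ) =ᵐ[μ] fun x => expv t x)
    (m k m' k' : ℤ) :
    ⟪E ![(m:ℝ), (k:ℝ)/p], E ![(m':ℝ), (k':ℝ)/p]⟫_ℂ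
      = if m = m' ∧ k = k' then 1 else 0 := by
  rw [MeasureTheory.L2.inner_def]
  have hae : (fun z => ⟪(E ![(m:ℝ), (k:ℝ)/p] : (Fin 2 → ℝ) → ℂ) z,
        (E ![(m':ℝ), (k':ℝ)/p] : (Fin 2 → ℝ) → ℂ) z⟫_ℂ)
      =ᵐ[μ] (fun z => expv ![((m' - m : ℤ) : ℝ), ((k' - k : ℤ) : ℝ)/p] z) := by
    filter_upwards [hE ![(m:ℝ), (k:ℝ)/p], hE ![(m':ℝ), (k':ℝ)/p]] with z h1 h2
    rw [RCLike.inner_apply, h1, h2, conj_expv, mul_comm, expv_mul, neg_vec_add p hppos]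
  rw [integral_congr_ae hae, integral_expv p hppos μ hμ (m' - m) (k' - k)]
  by_cases h : m = m' ∧ k = k'
  · obtain ⟨h1, h2⟩ := h
    simp [h1, h2]
  · have : ¬(m' - m = 0 ∧ k' - k = 0) := by omega
    simp [h, this]

lemma fourier_uniq {T : ℝ} (hT : 0 < T) (h : ℝ → ℂ) (hmeas : Measurable h)
    (hmem : MemLp h 2 (volume.restrict (Set.Ioc (0:ℝ) T)))
    (hc : ∀ n : ℤ, (∫ x in Set.Ioc (0:ℝ) T,
      Complex.exp (2 * (Real.pi:ℂ) * Complex.I * (n:ℂ) * (x:ℂ) / (T:ℂ)) * h x) = 0) :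
    h =ᵐ[volume.restrict (Set.Ioc (0:ℝ) T)] 0 := by
  haveI : Fact (0 < T) := ⟨hT⟩
  set H : AddCircle T → ℂ := AddCircle.liftIoc T 0 h with hH
  have hHmeas : Measurable H := by
    have : H = (h ∘ Subtype.val) ∘ (AddCircle.measurableEquivIoc T 0) := rfl
    rw [this]
    exact (hmeas.comp measurable_subtype_coe).comp
      (AddCircle.measurableEquivIoc T 0).measurable
  have hmp := AddCircle.measurePreserving_mk T 0
  rw [zero_add] at hmp
  have hae : (H ∘ (QuotientAddGroup.mk : ℝ → AddCircle T))
      =ᵐ[volume.restrict (Set.Ioc (0:ℝ) T)] h := by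
    filter_upwards [ae_restrict_mem measurableSet_Ioc] with x hx
    have : x ∈ Set.Ioc (0:ℝ) (0 + T) := by rwa [zero_add]
    exact AddCircle.liftIoc_coe_apply this
  have hmemvol : MemLp H 2 (volume : Measure (AddCircle T)) := by
    rw [← hmp.map_eq]
    rw [memLp_map_measure_iff hHmeas.aestronglyMeasurable hmp.measurable.aemeasurable]
    exact hmem.ae_eq hae.symm
  have hhaar : (AddCircle.haarAddCircle : Measure (AddCircle T))
      = (ENNReal.ofReal T)⁻¹ • (volume : Measure (AddCircle T)) := by
    rw [AddCircle.volume_eq_smul_haarAddCircle, smul_smul,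
      ENNReal.inv_mul_cancel (ENNReal.ofReal_pos.mpr hT).ne' ENNReal.ofReal_ne_top, one_smul]
  have hmemhaar : MemLp H 2 (AddCircle.haarAddCircle) := by
    rw [hhaar]
    exact hmemvol.smul_measure (by simp [hT])
  set HL : Lp ℂ 2 (AddCircle.haarAddCircle (T := T)) := hmemhaar.toLp H with hHL
  have hcoeff : ∀ n : ℤ, fourierCoeff (HL : AddCircle T → ℂ) n = 0 := by
    intro n
    have h1 : fourierCoeff (HL : AddCircle T → ℂ) n = fourierCoeff H n := by
      unfold fourierCoeff
      apply integral_congr_ae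
      filter_upwards [hmemhaar.coeFn_toLp] with t ht
      rw [ht]
    rw [h1, hH, fourierCoeff_liftIoc_eq, fourierCoeffOn_eq_integral]
    have h2 : (∫ x in (0:ℝ)..(0 + T), (fourier (-n) (x : AddCircle (0 + T - 0))) • h x) = 0 := by
      have h3 : ∀ x : ℝ, (fourier (-n) (x : AddCircle (0 + T - 0))) • h x
          = Complex.exp (2 * (Real.pi:ℂ) * Complex.I * ((-n : ℤ):ℂ) * (x:ℂ) / (T:ℂ)) * h x := by
        intro x
        rw [smul_eq_mul]
        congr 1
        rw [fourier_coe_apply]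
        norm_num
      simp_rw [h3]
      rw [intervalIntegral.integral_of_le (by linarith : (0:ℝ) ≤ 0 + T), zero_add]
      exact hc (-n)
    rw [h2, smul_zero]
  have hreprzero : HL = 0 := by
    have : fourierBasis.repr HL = 0 := by
      ext n
      rw [fourierBasis_repr]
      simpa using hcoeff n
    simpa using (fourierBasis (T := T)).repr.map_eq_zero_iff.mp this
  have hHzero : H =ᵐ[AddCircle.haarAddCircle] 0 := by
    have h1 : H =ᵐ[AddCircle.haarAddCircle] (HL : AddCircle T → ℂ) := hmemhaar.coeFn_toLp.symm
    have h2 : (HL : AddCircle T → ℂ) =ᵐ[AddCircle.haarAddCircle] 0 := by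
      rw [hreprzero]; exact Lp.coeFn_zero _ _ _
    exact h1.trans h2
  have hHzerovol : H =ᵐ[(volume : Measure (AddCircle T))] 0 := by
    rw [AddCircle.volume_eq_smul_haarAddCircle]
    exact MeasureTheory.Measure.ae_smul_measure hHzero _
  have : (H ∘ (QuotientAddGroup.mk : ℝ → AddCircle T))
      =ᵐ[volume.restrict (Set.Ioc (0:ℝ) T)] (fun _ => (0:ℂ)) := by
    exact hmp.quasiMeasurePreserving.ae_eq_comp (g := H) (g' := fun _ => (0:ℂ)) hHzerovol
  exact (hae.symm.trans this)

lemma sq_int_le {α : Type*} [MeasurableSpace α] (m : Measure α) [IsFiniteMeasure m] (φ : α → ℂ)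
    (hmem : MemLp φ 2 m) :
    (∫ a, ‖φ a‖ ∂m) ^ 2 ≤ (m Set.univ).toReal * ∫ a, ‖φ a‖ ^ 2 ∂m := by
  have hpq : Real.HolderConjugate 2 2 := Real.HolderConjugate.two_two
  have hmem' : MemLp φ (ENNReal.ofReal (2:ℝ)) m := by
    rwa [show ENNReal.ofReal (2:ℝ) = 2 by norm_num]
  have hone : MemLp (fun _ : α => (1:ℂ)) (ENNReal.ofReal (2:ℝ)) m := memLp_const 1
  have h := integral_mul_norm_le_Lp_mul_Lq hpq hmem' hone
  simp only [norm_one, mul_one, one_pow, Real.rpow_two, Real.one_rpow] at h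
  -- h : ∫ ‖φ a‖ ≤ (∫ ‖φ a‖ ^ (2:ℝ)) ^ (1/2 : ℝ) * (∫ (1:ℝ)) ^ (1/2 : ℝ)
  have hnn : (0:ℝ) ≤ ∫ a, ‖φ a‖ ∂m := integral_nonneg fun a => norm_nonneg _
  have hInn : (0:ℝ) ≤ ∫ a, ‖φ a‖ ^ 2 ∂m :=
    integral_nonneg fun a => sq_nonneg _
  have hMnn : (0:ℝ) ≤ ∫ _ : α, (1:ℝ) ∂m := integral_nonneg fun _ => zero_le_one
  calc (∫ a, ‖φ a‖ ∂m) ^ 2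
      ≤ ((∫ a, ‖φ a‖ ^ 2 ∂m) ^ (1/2 : ℝ) * (∫ _ : α, (1:ℝ) ∂m) ^ (1/2 : ℝ)) ^ 2 := by
        apply pow_le_pow_left₀ hnn h
    _ = (∫ a, ‖φ a‖ ^ 2 ∂m) * (∫ _ : α, (1:ℝ) ∂m) := by
        rw [mul_pow, ← Real.rpow_natCast ((∫ a, ‖φ a‖ ^ 2 ∂m) ^ (1/2 : ℝ)) 2,
          ← Real.rpow_natCast ((∫ _ : α, (1:ℝ) ∂m) ^ (1/2 : ℝ)) 2,
          ← Real.rpow_mul hInn, ← Real.rpow_mul hMnn]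
        norm_num
    _ = (m Set.univ).toReal * ∫ a, ‖φ a‖ ^ 2 ∂m := by
        rw [integral_const, smul_eq_mul, mul_one, mul_comm]; rfl

lemma norm_cexp_real (r : ℝ) : ‖Complex.exp (2 * Real.pi * Complex.I * (r:ℂ))‖ = 1 := by
  have h : 2 * (Real.pi:ℂ) * Complex.I * (r:ℂ) = ((2 * Real.pi * r : ℝ) : ℂ) * Complex.I := by
    push_cast; ring
  rw [h]
  exact Complex.norm_exp_ofReal_mul_I _

lemma complete_aux (p : ℕ) (hppos : 0 < p) (G : ℝ × ℝ → ℂ) (hGmeas : Measurable G)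
    (hGmem : MemLp G 2 (sigm p))
    (horth : ∀ m k : ℤ, ∫ w, expv ![(m:ℝ), (k:ℝ)/(p:ℝ)] (Phi w) * G w ∂(sigm p) = 0) :
    ∫ w, ‖G w‖ ^ 2 ∂(sigm p) = 0 := by
  have hp0 : (0:ℝ) < p := by exact_mod_cast hppos
  set μ₁ := volume.restrict (Set.Icc (0:ℝ) 1) with hμ₁
  set μ₂ := volume.restrict (Set.Icc (0:ℝ) (p:ℝ)) with hμ₂
  have hσ : sigm p = μ₁.prod μ₂ := rfl
  have hIoc1 : volume.restrict (Set.Ioc (0:ℝ) 1) = μ₁ :=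
    Measure.restrict_congr_set Ioc_ae_eq_Icc
  have hIocp : volume.restrict (Set.Ioc (0:ℝ) (p:ℝ)) = μ₂ :=
    Measure.restrict_congr_set Ioc_ae_eq_Icc
  have hsplit : ∀ (m k : ℤ) (x y : ℝ), expv ![(m:ℝ), (k:ℝ)/(p:ℝ)] (Phi (x, y))
      = Complex.exp (2 * Real.pi * Complex.I * (((m:ℝ) * x : ℝ) : ℂ))
        * (Complex.exp (2 * Real.pi * Complex.I * ((((k:ℝ)/(p:ℝ)) * gfun x : ℝ) : ℂ))
        * Complex.exp (2 * Real.pi * Complex.I * ((((k:ℝ)/(p:ℝ)) * y : ℝ) : ℂ))) := by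
    intro m k x y
    unfold expv Phi
    rw [← Complex.exp_add, ← Complex.exp_add, Fin.sum_univ_two]
    congr 1
    simp only [Matrix.cons_val_zero, Matrix.cons_val_one, Matrix.head_cons,
      Complex.ofReal_mul, Complex.ofReal_add, Complex.ofReal_div, Complex.ofReal_intCast,
      Complex.ofReal_natCast]
    push_cast
    ring
  set A : ℤ → ℝ → ℂ := fun k x =>
    ∫ y, Complex.exp (2 * Real.pi * Complex.I * ((((k:ℝ)/(p:ℝ)) * y : ℝ) : ℂ)) * G (x, y) ∂μ₂
    with hA
  set B : ℤ → ℝ → ℂ := fun k x =>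
    Complex.exp (2 * Real.pi * Complex.I * ((((k:ℝ)/(p:ℝ)) * gfun x : ℝ) : ℂ)) * A k x with hB
  have hGint : Integrable G (sigm p) := hGmem.integrable one_le_two
  have hGsq : Integrable (fun w : ℝ × ℝ => ‖G w‖ ^ 2) (sigm p) :=
    (memLp_two_iff_integrable_sq_norm hGmeas.aestronglyMeasurable).mp hGmem
  have hGsq' : Integrable (fun w : ℝ × ℝ => ‖G w‖ ^ 2) (μ₁.prod μ₂) := by rwa [hσ] at hGsq
  have hAmeas : ∀ k, Measurable (A k) := by
    intro k
    have hm : StronglyMeasurable (fun w : ℝ × ℝ =>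
        Complex.exp (2 * Real.pi * Complex.I * ((((k:ℝ)/(p:ℝ)) * w.2 : ℝ) : ℂ)) * G w) := by
      apply Measurable.stronglyMeasurable
      exact (Complex.measurable_exp.comp ((Complex.measurable_ofReal.comp
        (measurable_snd.const_mul _)).const_mul _)).mul hGmeas
    exact hm.integral_prod_right'.measurable
  have hBmeas : ∀ k, Measurable (B k) := by
    intro k
    exact (Complex.measurable_exp.comp ((Complex.measurable_ofReal.comp
      (measurable_gfun.const_mul _)).const_mul _)).mul (hAmeas k)
  -- orthogonality in iterated form
  have h1 : ∀ m k : ℤ, ∫ x, Complex.exp (2 * Real.pi * Complex.I * (((m:ℝ) * x : ℝ) : ℂ))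
      * B k x ∂μ₁ = 0 := by
    intro m k
    have hint : Integrable (fun w => expv ![(m:ℝ), (k:ℝ)/(p:ℝ)] (Phi w) * G w) (μ₁.prod μ₂) := by
      rw [← hσ]
      exact hGint.bdd_mul ((expv_measurable _).comp measurable_Phi).aestronglyMeasurable
        (Filter.Eventually.of_forall fun w => le_of_eq (expv_norm _ _))
    have h3 : ∫ x, (∫ y, expv ![(m:ℝ), (k:ℝ)/(p:ℝ)] (Phi (x, y)) * G (x, y) ∂μ₂) ∂μ₁ = 0 := by
      rw [← MeasureTheory.integral_prod _ hint, ← hσ]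
      exact horth m k
    have h4 : ∀ x : ℝ, (∫ y, expv ![(m:ℝ), (k:ℝ)/(p:ℝ)] (Phi (x, y)) * G (x, y) ∂μ₂)
        = Complex.exp (2 * Real.pi * Complex.I * (((m:ℝ) * x : ℝ) : ℂ)) * B k x := by
      intro x
      have h5 : ∀ y : ℝ, expv ![(m:ℝ), (k:ℝ)/(p:ℝ)] (Phi (x, y)) * G (x, y)
          = (Complex.exp (2 * Real.pi * Complex.I * (((m:ℝ) * x : ℝ) : ℂ))
            * Complex.exp (2 * Real.pi * Complex.I * ((((k:ℝ)/(p:ℝ)) * gfun x : ℝ) : ℂ)))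
            * (Complex.exp (2 * Real.pi * Complex.I * ((((k:ℝ)/(p:ℝ)) * y : ℝ) : ℂ))
              * G (x, y)) := by
        intro y
        rw [hsplit m k x y]
        ring
      simp_rw [h5]
      rw [MeasureTheory.integral_const_mul, hB]
      simp only [hA]
      ring
    simp_rw [h4] at h3
    exact h3
  -- slice integrability
  have hslice : ∀ᵐ x ∂μ₁, Integrable (fun y => ‖G (x, y)‖ ^ 2) μ₂ := hGsq'.prod_right_ae
  have hD : Integrable (fun x => (p:ℝ) * ∫ y, ‖G (x, y)‖ ^ 2 ∂μ₂) μ₁ :=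
    hGsq'.integral_prod_left.const_mul _
  have hBmem : ∀ k, MemLp (B k) 2 μ₁ := by
    intro k
    refine (memLp_two_iff_integrable_sq_norm (hBmeas k).aestronglyMeasurable).mpr ?_
    refine Integrable.mono' hD ((hBmeas k).norm.pow_const 2).aestronglyMeasurable ?_
    filter_upwards [hslice] with x hx
    have hGxmeas : Measurable (fun y => G (x, y)) := hGmeas.comp measurable_prodMk_left
    have hGxmem : MemLp (fun y => G (x, y)) 2 μ₂ :=
      (memLp_two_iff_integrable_sq_norm hGxmeas.aestronglyMeasurable).mpr hx
    have hBnorm : ‖B k x‖ = ‖A k x‖ := by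
      rw [hB]; simp only [norm_mul, norm_cexp_real, one_mul]
    have hAle : ‖A k x‖ ≤ ∫ y, ‖G (x, y)‖ ∂μ₂ := by
      calc ‖A k x‖ ≤ ∫ y, ‖Complex.exp (2 * Real.pi * Complex.I
            * ((((k:ℝ)/(p:ℝ)) * y : ℝ) : ℂ)) * G (x, y)‖ ∂μ₂ := norm_integral_le_integral_norm _
        _ = ∫ y, ‖G (x, y)‖ ∂μ₂ := by
            refine integral_congr_ae (Filter.Eventually.of_forall fun y => ?_)
            simp only [norm_mul, norm_cexp_real, one_mul]
    have hCS : (∫ y, ‖G (x, y)‖ ∂μ₂) ^ 2 ≤ (p:ℝ) * ∫ y, ‖G (x, y)‖ ^ 2 ∂μ₂ := by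
      have := sq_int_le μ₂ _ hGxmem
      have hμ₂univ : (μ₂ Set.univ).toReal = (p:ℝ) := by
        rw [hμ₂, Measure.restrict_apply_univ, Real.volume_Icc, sub_zero,
          ENNReal.toReal_ofReal hp0.le]
      rwa [hμ₂univ] at this
    have hnn : (0:ℝ) ≤ ∫ y, ‖G (x, y)‖ ∂μ₂ := integral_nonneg fun y => norm_nonneg _
    calc ‖‖B k x‖ ^ 2‖ = ‖B k x‖ ^ 2 := by
          rw [Real.norm_eq_abs, _root_.abs_of_nonneg (sq_nonneg _)]
      _ = ‖A k x‖ ^ 2 := by rw [hBnorm]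
      _ ≤ (∫ y, ‖G (x, y)‖ ∂μ₂) ^ 2 := by
          exact pow_le_pow_left₀ (norm_nonneg _) hAle 2
      _ ≤ (p:ℝ) * ∫ y, ‖G (x, y)‖ ^ 2 ∂μ₂ := hCS
  -- B k vanishes
  have hBzero : ∀ k : ℤ, B k =ᵐ[μ₁] 0 := by
    intro k
    have hz := fourier_uniq one_pos (B k) (hBmeas k) (by rw [hIoc1]; exact hBmem k) ?_
    · rwa [hIoc1] at hz
    · intro n
      rw [hIoc1]
      have hconv : ∀ x : ℝ, Complex.exp (2 * (Real.pi:ℂ) * Complex.I * (n:ℂ) * (x:ℂ) / ((1:ℝ):ℂ))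
          = Complex.exp (2 * Real.pi * Complex.I * (((n:ℝ) * x : ℝ) : ℂ)) := by
        intro x; congr 1; push_cast; ring
      simp_rw [hconv]
      exact h1 n k
  have hAzero : ∀ᵐ x ∂μ₁, ∀ k : ℤ, A k x = 0 := by
    rw [ae_all_iff]
    intro k
    filter_upwards [hBzero k] with x hx
    have : Complex.exp (2 * Real.pi * Complex.I * ((((k:ℝ)/(p:ℝ)) * gfun x : ℝ) : ℂ)) * A k x
        = 0 := hx
    exact (mul_eq_zero.mp this).resolve_left (Complex.exp_ne_zero _)
  -- slices of G vanish
  have hGslice : ∀ᵐ x ∂μ₁, (fun y => G (x, y)) =ᵐ[μ₂] 0 := by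
    filter_upwards [hAzero, hslice] with x hAx hx
    have hGxmeas : Measurable (fun y => G (x, y)) := hGmeas.comp measurable_prodMk_left
    have hGxmem : MemLp (fun y => G (x, y)) 2 μ₂ :=
      (memLp_two_iff_integrable_sq_norm hGxmeas.aestronglyMeasurable).mpr hx
    have hz := fourier_uniq hp0 (fun y => G (x, y)) hGxmeas (by rw [hIocp]; exact hGxmem) ?_
    · rwa [hIocp] at hz
    · intro n
      rw [hIocp]
      have hconv : ∀ y : ℝ, Complex.exp (2 * (Real.pi:ℂ) * Complex.I * (n:ℂ) * (y:ℂ) / ((p:ℝ):ℂ))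
          = Complex.exp (2 * Real.pi * Complex.I * ((((n:ℝ)/(p:ℝ)) * y : ℝ) : ℂ)) := by
        intro y; congr 1; push_cast; ring
      simp_rw [hconv]
      exact hAx n
  have hinner0 : ∀ᵐ x ∂μ₁, (∫ y, ‖G (x, y)‖ ^ 2 ∂μ₂) = 0 := by
    filter_upwards [hGslice] with x hx
    have h0 : (fun y => ‖G (x, y)‖ ^ 2) =ᵐ[μ₂] 0 := by
      filter_upwards [hx] with y hy
      simp only [Pi.zero_apply] at hy ⊢
      simp [hy]
    rw [integral_congr_ae h0]
    simp
  rw [hσ, MeasureTheory.integral_prod _ hGsq']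
  rw [integral_congr_ae hinner0]
  simp
theorem stmt18
    (p : ℕ) (hppos : 0 < p) (hpodd : Odd p)
    (μ : Measure (Fin 2 → ℝ)) [IsProbabilityMeasure μ]
    -- μ_B is determined by ∫ f dμ_B = (1/p) ∫₀¹ ∫₀ᵖ f(x, g(x)+y) dy dx
    (hμ : ∀ f : (Fin 2 → ℝ) → ℂ, Measurable f →
      (∃ Cb : ℝ, ∀ z, ‖f z‖ ≤ Cb) →
      ∫ z, f z ∂μ = (p : ℂ)⁻¹ *
        ∫ x in Set.Icc (0 : ℝ) 1, ∫ y in Set.Icc (0 : ℝ) (p : ℝ),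
          f ![x, gfun x + y])
    (E : (Fin 2 → ℝ) → Lp ℂ 2 μ)
    (hE : ∀ t : Fin 2 → ℝ, (E t : (Fin 2 → ℝ) → ℂ) =ᵐ[μ] fun x => expv t x) :
    -- ℤ × (1/p)ℤ is a spectrum for μ_B
    Orthonormal ℂ
      (fun lam : {lam : Fin 2 → ℝ | ∃ m k : ℤ, lam = ![(m : ℝ), (k : ℝ) / p]} =>
        E (lam : Fin 2 → ℝ)) ∧
    (Submodule.span ℂ
      {g | ∃ lam ∈ {lam : Fin 2 → ℝ | ∃ m k : ℤ, lam = ![(m : ℝ), (k : ℝ) / p]},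
        g = E lam}).topologicalClosure = ⊤ := by
  classical
  have hp0 : (0:ℝ) < p := by exact_mod_cast hppos
  constructor
  · -- orthonormality
    rw [orthonormal_iff_ite]
    rintro ⟨a, ha⟩ ⟨b, hb⟩
    obtain ⟨m, k, hi⟩ := ha
    obtain ⟨m', k', hj⟩ := hb
    have key : ⟪E a, E b⟫_ℂ = if m = m' ∧ k = k' then 1 else 0 := by
      rw [hi, hj]
      exact inner_E p hppos μ hμ E hE m k m' k'
    show ⟪E a, E b⟫_ℂ = _
    rw [key]
    refine if_congr ?_ rfl rfl
    constructor
    · rintro ⟨h1, h2⟩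
      exact Subtype.ext (by simp only [hi, hj, h1, h2])
    · intro hq
      exact vec_inj p hppos (by rw [← hi, ← hj]; exact congrArg Subtype.val hq)
  · -- completeness
    rw [Submodule.topologicalClosure_eq_top_iff, Submodule.eq_bot_iff]
    intro f hf
    obtain ⟨F, hF⟩ : ∃ F : (Fin 2 → ℝ) → ℂ, F = (f : (Fin 2 → ℝ) → ℂ) := ⟨_, rfl⟩
    have horthE : ∀ m k : ℤ, ⟪E ![(m:ℝ), (k:ℝ)/p], f⟫_ℂ = 0 := by
      intro m k
      refine (Submodule.mem_orthogonal _ f).1 hf _ (Submodule.subset_span ?_)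
      exact ⟨![(m:ℝ), (k:ℝ)/p], ⟨m, k, rfl⟩, rfl⟩
    have hneg : ∀ m k : ℤ, (-(![((-m : ℤ):ℝ), ((-k : ℤ):ℝ)/p]) : Fin 2 → ℝ)
        = ![(m:ℝ), (k:ℝ)/p] := by
      intro m k; funext i; fin_cases i <;> simp <;> push_cast <;> ring
    have hint : ∀ m k : ℤ,
        ∫ z, expv ![(m:ℝ), (k:ℝ)/(p:ℝ)] z * F z ∂μ = 0 := by
      intro m k
      have h0 := horthE (-m) (-k)
      rw [MeasureTheory.L2.inner_def] at h0
      rw [← h0]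
      apply integral_congr_ae
      filter_upwards [hE ![((-m : ℤ):ℝ), ((-k : ℤ):ℝ)/p]] with z hz
      rw [RCLike.inner_apply, hz, conj_expv, hneg m k, hF, mul_comm]
    set ν : Measure (ℝ × ℝ) := (p:ℝ≥0∞)⁻¹ • sigm p with hν
    have hmapμ : μ = Measure.map Phi ν := map_eq p hppos μ hμ
    have hfmeas : Measurable F := by
      rw [hF]; exact (Lp.stronglyMeasurable f).measurable
    set G : ℝ × ℝ → ℂ := fun w => F (Phi w) with hG
    have hGmeas : Measurable G := hfmeas.comp measurable_Phi
    have hsmul : sigm p = (p:ℝ≥0∞) • ν := by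
      rw [hν, smul_smul, ENNReal.mul_inv_cancel (by exact_mod_cast hppos.ne')
        (ENNReal.natCast_ne_top p), one_smul]
    have hGmem : MemLp G 2 (sigm p) := by
      have h0 : MemLp F 2 μ := by rw [hF]; exact Lp.memLp f
      have h0' : MemLp F 2 (Measure.map Phi ν) := by rwa [hmapμ] at h0
      have h1 : MemLp G 2 ν := (memLp_map_measure_iff
        hfmeas.aestronglyMeasurable measurable_Phi.aemeasurable).1 h0'
      rw [hsmul]
      exact h1.smul_measure (ENNReal.natCast_ne_top p)
    have hpinv : ((p:ℝ≥0∞)⁻¹).toReal = (p:ℝ)⁻¹ := by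
      rw [ENNReal.toReal_inv]; simp
    have horthG : ∀ m k : ℤ,
        ∫ w, expv ![(m:ℝ), (k:ℝ)/(p:ℝ)] (Phi w) * G w ∂(sigm p) = 0 := by
      intro m k
      have h0 := hint m k
      rw [hmapμ] at h0
      rw [integral_map measurable_Phi.aemeasurable
        (f := fun z => expv ![(m:ℝ), (k:ℝ)/(p:ℝ)] z * F z)
        ((expv_measurable _).mul hfmeas).aestronglyMeasurable] at h0
      rw [hν, integral_smul_measure, hpinv] at h0
      rcases smul_eq_zero.mp h0 with h | h
      · exact absurd h (by positivity)
      · exact h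
    have hzero := complete_aux p hppos G hGmeas hGmem horthG
    have hfnorm : ∫ z, ‖F z‖ ^ 2 ∂μ = 0 := by
      rw [hmapμ, integral_map measurable_Phi.aemeasurable
        (hfmeas.norm.pow_const 2).aestronglyMeasurable]
      rw [hν, integral_smul_measure, hpinv]
      have h2 : ∫ w, ‖F (Phi w)‖ ^ 2 ∂(sigm p) = 0 := hzero
      rw [h2, smul_zero]
    have hint2 : Integrable (fun z => ‖F z‖ ^ 2) μ := by
      rw [hF]
      exact (memLp_two_iff_integrable_sq_norm (Lp.aestronglyMeasurable f)).mp (Lp.memLp f)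
    have hae0 : (fun z => ‖F z‖ ^ 2) =ᵐ[μ] 0 :=
      (integral_eq_zero_iff_of_nonneg (fun z => sq_nonneg _) hint2).mp hfnorm
    have hfae : (f : (Fin 2 → ℝ) → ℂ) =ᵐ[μ] 0 := by
      rw [← hF]
      filter_upwards [hae0] with z hz
      simp only [Pi.zero_apply] at hz ⊢
      exact norm_eq_zero.mp (pow_eq_zero_iff (two_ne_zero) |>.mp hz)
    exact Lp.eq_zero_iff_ae_eq_zero.mpr hfae
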